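/- Let λ₁, λ₂ > 0, let x > 0, and let y, α be real numbers with 0 < y < α < (λ₁/λ₂) x. Then (λ₁ x² + λ₂ y²)/(x + y)² ≥ (1 + ε) · λ₁λ₂/(λ₁ + λ₂), where ε = (λ₁ x − λ₂ α)² / ( λ₁ λ₂ (x + α)² ). -/

import Mathlib

/-- **Refined two-term mean inequality.**
For `λ₁, λ₂ > 0`, `x > 0` and `0 < y < α < (λ₁/λ₂)x`,
`(λ₁x² + λ₂y²)/(x+y)² ≥ (1+ε) λ₁λ₂/(λ₁+λ₂)` with
`ε = (λ₁x - λ₂α)²/(λ₁λ₂(x+α)²)`. -/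
theorem refined_two_term_mean_inequality
    (l₁ l₂ x y α : ℝ)
    (hl₁ : 0 < l₁) (hl₂ : 0 < l₂) (hx : 0 < x)
    (hy : 0 < y) (hyα : y < α) (hαx : α < (l₁/l₂)*x) :
    (l₁*x^2 + l₂*y^2)/(x + y)^2
      ≥ (1 + (l₁*x - l₂*α)^2/(l₁*l₂*(x + α)^2)) * (l₁*l₂/(l₁ + l₂)) := by
  have hα : 0 < α := hy.trans hyα
  have hxy : 0 < x + y := by linarith
  have hxα : 0 < x + α := by linarith
  have hdα : 0 ≤ l₁*x - l₂*α := by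
    have h := hαx
    rw [div_mul_eq_mul_div, lt_div_iff₀ hl₂] at h
    nlinarith
  have hdy : l₁*x - l₂*α ≤ l₁*x - l₂*y := by nlinarith
  have key : (l₁*x - l₂*α)*(x + y) ≤ (l₁*x - l₂*y)*(x + α) :=
    mul_le_mul hdy (by linarith) hxy.le (by linarith)
  have key2 : (l₁*x - l₂*α)^2*(x + y)^2 ≤ (l₁*x - l₂*y)^2*(x + α)^2 := by
    have h1 : 0 ≤ (l₁*x - l₂*α)*(x + y) := mul_nonneg hdα hxy.le
    nlinarith [sq_nonneg ((l₁*x - l₂*y)*(x + α) - (l₁*x - l₂*α)*(x + y))]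
  have h1 : (l₁*x^2 + l₂*y^2)/(x + y)^2
      = (1 + (l₁*x - l₂*y)^2/(l₁*l₂*(x + y)^2)) * (l₁*l₂/(l₁ + l₂)) := by
    field_simp
    ring
  rw [ge_iff_le, h1]
  apply mul_le_mul_of_nonneg_right _ (by positivity)
  apply add_le_add_right
  rw [div_le_div_iff₀ (by positivity) (by positivity)]
  nlinarith [mul_le_mul_of_nonneg_left key2 (mul_pos hl₁ hl₂).le]
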